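/- Let n ≥ 4 be even and let G be a simple graph with no cycle of length at most n. Let G' be obtained from G by adding, for each unordered pair of vertices {a, b} of G admitting no path of length at most n/2 in G, a set of n/2 − 1 new vertices forming a path of length n/2 from a to b, where the new vertex sets for distinct pairs are pairwise disjoint and carry no other edges. Then G' has no cycle of length at most n. -/

import Mathlib

open SimpleGraph Sum

section PAux

variable {V ι : Type*}

/-- The auxiliary graph on `V`: `G` plus one edge for each formal path. -/
def HGr (G : SimpleGraph V) (e : ι → V × V) : SimpleGraph V where
  Adj a b := (G.Adj a b ∨ ∃ i, e i = (a, b) ∨ e i = (b, a)) ∧ a ≠ b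
  symm := ⟨by
    rintro a b ⟨h, hab⟩
    refine ⟨?_, hab.symm⟩
    rcases h with h | ⟨i, h | h⟩
    · exact Or.inl h.symm
    · exact Or.inr ⟨i, Or.inr h⟩
    · exact Or.inr ⟨i, Or.inl h⟩⟩
  loopless := ⟨fun a h => h.2 rfl⟩

open Classical in
/-- weight of a walk in `HGr`: edges of `G` count 1, other edges count `m`. -/
noncomputable def wtW (G H : SimpleGraph V) (m : ℕ) : ∀ {a b : V}, H.Walk a b → ℕ
  | _, _, SimpleGraph.Walk.nil => 0
  | _, _, @SimpleGraph.Walk.cons _ _ u v _ _ q => (if G.Adj u v then 1 else m) + wtW G H m q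

lemma length_le_wtW (G H : SimpleGraph V) (m : ℕ) (hm : 1 ≤ m) {a b : V} (q : H.Walk a b) :
    q.length ≤ wtW G H m q := by
  induction q with
  | nil => simp [wtW]
  | cons h q ih =>
    rw [Walk.length_cons]
    simp only [wtW]
    split_ifs <;> omega

lemma wtW_new (G H : SimpleGraph V) (m : ℕ) (hm : 1 ≤ m) {a b : V} (q : H.Walk a b)
    (x y : V) (hx : s(x, y) ∈ q.edges) (hnG : ¬ G.Adj x y) :
    m - 1 + q.length ≤ wtW G H m q := by
  induction q with
  | nil => simp at hx
  | cons h q ih =>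
    rw [Walk.edges_cons, List.mem_cons] at hx
    rw [Walk.length_cons]
    simp only [wtW]
    rcases hx with hx | hx
    · rcases Sym2.eq_iff.mp hx with ⟨rfl, rfl⟩ | ⟨rfl, rfl⟩
      · rw [if_neg hnG]
        have := length_le_wtW G H m hm q
        omega
      · rw [if_neg (fun hc => hnG hc.symm)]
        have := length_le_wtW G H m hm q
        omega
    · have := ih hx
      split_ifs <;> omega

lemma wtW_allG (G H : SimpleGraph V) (m : ℕ) {a b : V} (q : H.Walk a b)
    (hall : ∀ x y, s(x, y) ∈ q.edges → G.Adj x y) :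
    ∃ W : G.Walk a b, W.length = q.length := by
  induction q with
  | nil => exact ⟨Walk.nil, rfl⟩
  | cons h q ih =>
    obtain ⟨W, hW⟩ := ih (fun x y hxy => hall x y (by rw [Walk.edges_cons]; exact List.mem_cons_of_mem _ hxy))
    have hG : G.Adj _ _ := hall _ _ (by rw [Walk.edges_cons]; exact List.mem_cons_self)
    exact ⟨Walk.cons hG W, by simp [hW]⟩

lemma length_rotate' {W : Type*} [DecidableEq W] {G : SimpleGraph W} {u v : W}
    (c : G.Walk v v) (h : u ∈ c.support) : (c.rotate _ h).length = c.length := by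
  have := (c.rotate_darts _ h).perm.length_eq
  rwa [Walk.length_darts, Walk.length_darts] at this

end PAux


section PMain

variable {V ι : Type*} {G : SimpleGraph V} {m : ℕ} {e : ι → V × V}
  {G' : SimpleGraph (V ⊕ ι × Fin (m - 1))}

lemma LR1 {x y : V ⊕ ι × Fin (m-1)} (p : G'.Walk x y) (hx : ∃ a, x = inl a)
    (hR : ∃ jl : ι × Fin (m-1), inr jl ∈ p.support) :
    ∃ (a : V) (ik : ι × Fin (m-1)) (h : G'.Adj (inl a) (inr ik)),
      (⟨(inl a, inr ik), h⟩ : G'.Dart) ∈ p.darts := by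
  induction p with
  | nil =>
    obtain ⟨a, rfl⟩ := hx
    obtain ⟨jl, hjl⟩ := hR
    simp at hjl
  | @cons x w y h q ih =>
    obtain ⟨a, rfl⟩ := hx
    cases w with
    | inr ik => exact ⟨a, ik, h, by rw [Walk.darts_cons]; exact List.mem_cons_self⟩
    | inl a2 =>
      obtain ⟨jl, hjl⟩ := hR
      rw [Walk.support_cons, List.mem_cons] at hjl
      rcases hjl with hjl | hjl
      · exact absurd hjl (by simp)
      · obtain ⟨a', ik, h', hd⟩ := ih ⟨a2, rfl⟩ ⟨jl, hjl⟩
        exact ⟨a', ik, h', by rw [Walk.darts_cons]; exact List.mem_cons_of_mem _ hd⟩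

lemma LR2 {x y : V ⊕ ι × Fin (m-1)} (p : G'.Walk x y) (hy : ∃ jl : ι × Fin (m-1), y = inr jl)
    (hL : ∃ a : V, inl a ∈ p.support) :
    ∃ (a : V) (ik : ι × Fin (m-1)) (h : G'.Adj (inl a) (inr ik)),
      (⟨(inl a, inr ik), h⟩ : G'.Dart) ∈ p.darts := by
  induction p with
  | nil =>
    obtain ⟨jl, rfl⟩ := hy
    obtain ⟨a, ha⟩ := hL
    simp at ha
  | @cons x w y h q ih =>
    cases x with
    | inl a =>
      cases w with
      | inr ik => exact ⟨a, ik, h, by rw [Walk.darts_cons]; exact List.mem_cons_self⟩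
      | inl a2 =>
        obtain ⟨a', ik, h', hd⟩ := ih hy ⟨a2, q.start_mem_support⟩
        exact ⟨a', ik, h', by rw [Walk.darts_cons]; exact List.mem_cons_of_mem _ hd⟩
    | inr jl0 =>
      obtain ⟨a, ha⟩ := hL
      rw [Walk.support_cons, List.mem_cons] at ha
      rcases ha with ha | ha
      · exact absurd ha (by simp)
      · obtain ⟨a', ik, h', hd⟩ := ih hy ⟨a, ha⟩
        exact ⟨a', ik, h', by rw [Walk.darts_cons]; exact List.mem_cons_of_mem _ hd⟩

lemma march_up
    (hGcross : ∀ (a : V) (i : ι) (k : Fin (m - 1)),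
      G'.Adj (Sum.inl a) (Sum.inr (i, k)) ↔
        ((k : ℕ) = 0 ∧ a = (e i).1) ∨ ((k : ℕ) = m - 2 ∧ a = (e i).2))
    (hGinr : ∀ (i j : ι) (k l : Fin (m - 1)),
      G'.Adj (Sum.inr (i, k)) (Sum.inr (j, l)) ↔
        (i = j ∧ ((k : ℕ) + 1 = l ∨ (l : ℕ) + 1 = k)))
    (i : ι) :
    ∀ (r : ℕ) (k : Fin (m-1)) (b : V) (p : G'.Walk (inr (i,k)) (inl b)),
    (k : ℕ) + r = m - 2 → p.IsPath →
    ((k : ℕ) = 0 → s(Sum.inl (e i).1, Sum.inr (i,k)) ∉ p.edges) →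
    (∀ l : Fin (m-1), (l:ℕ) < (k:ℕ) → Sum.inr (i,l) ∉ p.support) →
    ∃ p' : G'.Walk (inl (e i).2) (inl b),
      p'.IsPath ∧ p.length = r + 1 + p'.length ∧
      (∀ l : Fin (m-1), Sum.inr (i,l) ∉ p'.support) ∧
      (∀ z, z ∈ p'.support → z ∈ p.support) := by
  intro r
  induction r with
  | zero =>
    intro k b p hkr hp hedge hlow
    rw [Nat.add_zero] at hkr
    cases p with
    | cons h tail =>
      rename_i w
      have hconsP := (Walk.cons_isPath_iff h tail).mp hp
      cases w with
      | inl a' =>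
        rcases (hGcross a' i k).mp h.symm with ⟨hk0, ha'⟩ | ⟨hk2, ha'⟩
        · exfalso
          apply hedge hk0
          subst ha'
          rw [Walk.edges_cons, Sym2.eq_swap]
          exact List.mem_cons_self
        · subst ha'
          refine ⟨tail, hconsP.1, by simp [Walk.length_cons]; omega, ?_, ?_⟩
          · intro l hl
            have hlk : (l : ℕ) ≤ m - 2 := by have := l.isLt; omega
            rcases Nat.lt_or_ge (l : ℕ) (k : ℕ) with h1 | h1
            · exact hlow l h1 (by rw [Walk.support_cons]; exact List.mem_cons_of_mem _ hl)
            · have h2 : (l : ℕ) = (k : ℕ) := by omega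
              have h3 : l = k := Fin.ext h2
              subst h3
              exact hconsP.2 hl
          · intro z hz
            rw [Walk.support_cons]
            exact List.mem_cons_of_mem _ hz
      | inr jl =>
        obtain ⟨j, l⟩ := jl
        rcases (hGinr i j k l).mp h with ⟨rfl, hstep⟩
        exfalso
        rcases hstep with hstep | hstep
        · have := l.isLt; omega
        · exact hlow l (by omega) (by rw [Walk.support_cons]; exact List.mem_cons_of_mem _ tail.start_mem_support)
  | succ r ih =>
    intro k b p hkr hp hedge hlow
    cases p with
    | cons h tail =>
      rename_i w
      have hconsP := (Walk.cons_isPath_iff h tail).mp hp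
      cases w with
      | inl a' =>
        exfalso
        rcases (hGcross a' i k).mp h.symm with ⟨hk0, ha'⟩ | ⟨hk2, ha'⟩
        · apply hedge hk0
          subst ha'
          rw [Walk.edges_cons, Sym2.eq_swap]
          exact List.mem_cons_self
        · omega
      | inr jl =>
        obtain ⟨j, l⟩ := jl
        rcases (hGinr i j k l).mp h with ⟨rfl, hstep⟩
        rcases hstep with hstep | hstep
        · -- step up
          obtain ⟨p', hp', hlen, havoid, hsub⟩ := ih l b tail (by omega) hconsP.1
            (by intro hl0; exfalso; omega)
            (by
              intro l' hl'
              rcases Nat.lt_or_ge (l' : ℕ) (k : ℕ) with h1 | h1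
              · exact fun hmem => hlow l' h1 (by rw [Walk.support_cons]; exact List.mem_cons_of_mem _ hmem)
              · have : (l' : ℕ) = (k : ℕ) := by omega
                have : l' = k := Fin.ext this
                subst this
                exact fun hmem => hconsP.2 hmem)
          refine ⟨p', hp', by rw [Walk.length_cons]; omega, havoid, ?_⟩
          intro z hz
          rw [Walk.support_cons]
          exact List.mem_cons_of_mem _ (hsub z hz)
        · exact absurd (by rw [Walk.support_cons]; exact List.mem_cons_of_mem _ tail.start_mem_support)
            (hlow l (by omega))

lemma march_down
    (hGcross : ∀ (a : V) (i : ι) (k : Fin (m - 1)),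
      G'.Adj (Sum.inl a) (Sum.inr (i, k)) ↔
        ((k : ℕ) = 0 ∧ a = (e i).1) ∨ ((k : ℕ) = m - 2 ∧ a = (e i).2))
    (hGinr : ∀ (i j : ι) (k l : Fin (m - 1)),
      G'.Adj (Sum.inr (i, k)) (Sum.inr (j, l)) ↔
        (i = j ∧ ((k : ℕ) + 1 = l ∨ (l : ℕ) + 1 = k)))
    (i : ι) :
    ∀ (r : ℕ) (k : Fin (m-1)) (b : V) (p : G'.Walk (inr (i,k)) (inl b)),
    (k : ℕ) = r → p.IsPath →
    ((k : ℕ) = m - 2 → s(Sum.inl (e i).2, Sum.inr (i,k)) ∉ p.edges) →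
    (∀ l : Fin (m-1), (k:ℕ) < (l:ℕ) → Sum.inr (i,l) ∉ p.support) →
    ∃ p' : G'.Walk (inl (e i).1) (inl b),
      p'.IsPath ∧ p.length = r + 1 + p'.length ∧
      (∀ l : Fin (m-1), Sum.inr (i,l) ∉ p'.support) ∧
      (∀ z, z ∈ p'.support → z ∈ p.support) := by
  intro r
  induction r with
  | zero =>
    intro k b p hkr hp hedge hhigh
    cases p with
    | cons h tail =>
      rename_i w
      have hconsP := (Walk.cons_isPath_iff h tail).mp hp
      cases w with
      | inl a' =>
        rcases (hGcross a' i k).mp h.symm with ⟨hk0, ha'⟩ | ⟨hk2, ha'⟩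
        · subst ha'
          refine ⟨tail, hconsP.1, by simp [Walk.length_cons]; omega, ?_, ?_⟩
          · intro l hl
            rcases Nat.lt_or_ge (k : ℕ) (l : ℕ) with h1 | h1
            · exact hhigh l h1 (by rw [Walk.support_cons]; exact List.mem_cons_of_mem _ hl)
            · have h2 : (l : ℕ) = (k : ℕ) := by omega
              have h3 : l = k := Fin.ext h2
              subst h3
              exact hconsP.2 hl
          · intro z hz
            rw [Walk.support_cons]
            exact List.mem_cons_of_mem _ hz
        · exfalso
          apply hedge hk2
          subst ha'
          rw [Walk.edges_cons, Sym2.eq_swap]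
          exact List.mem_cons_self
      | inr jl =>
        obtain ⟨j, l⟩ := jl
        rcases (hGinr i j k l).mp h with ⟨rfl, hstep⟩
        exfalso
        rcases hstep with hstep | hstep
        · exact hhigh l (by omega) (by rw [Walk.support_cons]; exact List.mem_cons_of_mem _ tail.start_mem_support)
        · omega
  | succ r ih =>
    intro k b p hkr hp hedge hhigh
    cases p with
    | cons h tail =>
      rename_i w
      have hconsP := (Walk.cons_isPath_iff h tail).mp hp
      cases w with
      | inl a' =>
        exfalso
        rcases (hGcross a' i k).mp h.symm with ⟨hk0, ha'⟩ | ⟨hk2, ha'⟩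
        · omega
        · apply hedge hk2
          subst ha'
          rw [Walk.edges_cons, Sym2.eq_swap]
          exact List.mem_cons_self
      | inr jl =>
        obtain ⟨j, l⟩ := jl
        rcases (hGinr i j k l).mp h with ⟨rfl, hstep⟩
        rcases hstep with hstep | hstep
        · exact absurd (by rw [Walk.support_cons]; exact List.mem_cons_of_mem _ tail.start_mem_support)
            (hhigh l (by omega))
        · -- step down
          obtain ⟨p', hp', hlen, havoid, hsub⟩ := ih l b tail (by omega) hconsP.1
            (by intro hl2; exfalso; have := k.isLt; omega)
            (by
              intro l' hl'
              rcases Nat.lt_or_ge (k : ℕ) (l' : ℕ) with h1 | h1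
              · exact fun hmem => hhigh l' h1 (by rw [Walk.support_cons]; exact List.mem_cons_of_mem _ hmem)
              · have h2 : (l' : ℕ) = (k : ℕ) := by omega
                have h3 : l' = k := Fin.ext h2
                subst h3
                exact fun hmem => hconsP.2 hmem)
          refine ⟨p', hp', by rw [Walk.length_cons]; omega, havoid, ?_⟩
          intro z hz
          rw [Walk.support_cons]
          exact List.mem_cons_of_mem _ (hsub z hz)

lemma projW (hm : 2 ≤ m)
    (hne : ∀ i, (e i).1 ≠ (e i).2)
    (hGinl : ∀ a b : V, G'.Adj (Sum.inl a) (Sum.inl b) ↔ G.Adj a b)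
    (hGcross : ∀ (a : V) (i : ι) (k : Fin (m - 1)),
      G'.Adj (Sum.inl a) (Sum.inr (i, k)) ↔
        ((k : ℕ) = 0 ∧ a = (e i).1) ∨ ((k : ℕ) = m - 2 ∧ a = (e i).2))
    (hGinr : ∀ (i j : ι) (k l : Fin (m - 1)),
      G'.Adj (Sum.inr (i, k)) (Sum.inr (j, l)) ↔
        (i = j ∧ ((k : ℕ) + 1 = l ∨ (l : ℕ) + 1 = k))) :
    ∀ (N : ℕ) (a b : V) (p : G'.Walk (inl a) (inl b)), p.length ≤ N → p.IsPath →
    ∃ q : (HGr G e).Walk a b,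
      wtW G (HGr G e) m q ≤ p.length ∧
      ∀ x y, s(x,y) ∈ q.edges → ¬ G.Adj x y →
        ∃ j, (e j = (x,y) ∨ e j = (y,x)) ∧ ∃ l : Fin (m-1), Sum.inr (j,l) ∈ p.support := by
  intro N
  induction N with
  | zero =>
    intro a b p hlen hp
    have h0 : p.length = 0 := by omega
    have hab : a = b := by
      have := Walk.eq_of_length_eq_zero h0
      exact Sum.inl_injective this
    subst hab
    exact ⟨Walk.nil, by simp [wtW], by simp⟩
  | succ N ih =>
    intro a b p hlen hp
    cases p with
    | nil => exact ⟨Walk.nil, by simp [wtW], by simp⟩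
    | cons h tail =>
      rename_i w
      have hconsP := (Walk.cons_isPath_iff h tail).mp hp
      rw [Walk.length_cons] at hlen ⊢
      cases w with
      | inl a' =>
        have hG : G.Adj a a' := (hGinl a a').mp h
        obtain ⟨q', hwt, hnew⟩ := ih a' b tail (by omega) hconsP.1
        refine ⟨Walk.cons (@id ((HGr G e).Adj a a') (And.intro (Or.inl hG) hG.ne)) q', ?_, ?_⟩
        · simp only [wtW]
          rw [if_pos hG]
          omega
        · intro x y hxy hnG
          rw [Walk.edges_cons, List.mem_cons] at hxy
          rcases hxy with hxy | hxy
          · exfalso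
            rcases Sym2.eq_iff.mp hxy with ⟨rfl, rfl⟩ | ⟨rfl, rfl⟩
            · exact hnG hG
            · exact hnG hG.symm
          · obtain ⟨j, hj, l, hl⟩ := hnew x y hxy hnG
            exact ⟨j, hj, l, by rw [Walk.support_cons]; exact List.mem_cons_of_mem _ hl⟩
      | inr ik =>
        obtain ⟨i, k⟩ := ik
        rcases (hGcross a i k).mp h with ⟨hk0, ha⟩ | ⟨hk2, ha⟩
        · -- entering at the e i .1 end, marching up
          obtain ⟨p', hp', hplen, havoid, hsub⟩ := march_up hGcross hGinr i (m-2) k b tail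
            (by omega) hconsP.1
            (by
              intro _ hmem
              have : Sum.inl (e i).1 ∈ tail.support := tail.fst_mem_support_of_mem_edges hmem
              rw [← ha] at this
              exact hconsP.2 this)
            (by intro l hl; omega)
          obtain ⟨q', hwt, hnew⟩ := ih (e i).2 b p' (by omega) hp'
          have hH : (HGr G e).Adj a (e i).2 := by
            refine And.intro (Or.inr ⟨i, Or.inl ?_⟩) ?_
            · rw [ha]
            · rw [ha]; exact hne i
          refine ⟨Walk.cons hH q', ?_, ?_⟩
          · simp only [wtW]
            split_ifs <;> omega
          · intro x y hxy hnG
            rw [Walk.edges_cons, List.mem_cons] at hxy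
            rcases hxy with hxy | hxy
            · refine ⟨i, ?_, k, by rw [Walk.support_cons]; exact List.mem_cons_of_mem _ tail.start_mem_support⟩
              rcases Sym2.eq_iff.mp hxy with ⟨rfl, rfl⟩ | ⟨rfl, rfl⟩
              · left; rw [ha]
              · right; rw [ha]
            · obtain ⟨j, hj, l, hl⟩ := hnew x y hxy hnG
              refine ⟨j, hj, l, ?_⟩
              rw [Walk.support_cons]
              exact List.mem_cons_of_mem _ (hsub _ hl)
        · -- entering at the e i .2 end, marching down
          obtain ⟨p', hp', hplen, havoid, hsub⟩ := march_down hGcross hGinr i (m-2) k b tail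
            (by omega) hconsP.1
            (by
              intro _ hmem
              have : Sum.inl (e i).2 ∈ tail.support := tail.fst_mem_support_of_mem_edges hmem
              rw [← ha] at this
              exact hconsP.2 this)
            (by intro l hl; have := l.isLt; omega)
          obtain ⟨q', hwt, hnew⟩ := ih (e i).1 b p' (by omega) hp'
          have hH : (HGr G e).Adj a (e i).1 := by
            refine And.intro (Or.inr ⟨i, Or.inr ?_⟩) ?_
            · rw [ha]
            · rw [ha]; exact (hne i).symm
          refine ⟨Walk.cons hH q', ?_, ?_⟩
          · simp only [wtW]
            split_ifs <;> omega
          · intro x y hxy hnG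
            rw [Walk.edges_cons, List.mem_cons] at hxy
            rcases hxy with hxy | hxy
            · refine ⟨i, ?_, k, by rw [Walk.support_cons]; exact List.mem_cons_of_mem _ tail.start_mem_support⟩
              rcases Sym2.eq_iff.mp hxy with ⟨rfl, rfl⟩ | ⟨rfl, rfl⟩
              · right; rw [ha]
              · left; rw [ha]
            · obtain ⟨j, hj, l, hl⟩ := hnew x y hxy hnG
              refine ⟨j, hj, l, ?_⟩
              rw [Walk.support_cons]
              exact List.mem_cons_of_mem _ (hsub _ hl)

lemma main_cross (hm : 2 ≤ m)
    (hne : ∀ i, (e i).1 ≠ (e i).2)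
    (hfar : ∀ i, ¬ ∃ p : G.Walk (e i).1 (e i).2, p.IsPath ∧ p.length ≤ m)
    (hinj : ∀ i j, (e i = e j ∨ e i = ((e j).2, (e j).1)) → i = j)
    (hGinl : ∀ a b : V, G'.Adj (Sum.inl a) (Sum.inl b) ↔ G.Adj a b)
    (hGcross : ∀ (a : V) (i : ι) (k : Fin (m - 1)),
      G'.Adj (Sum.inl a) (Sum.inr (i, k)) ↔
        ((k : ℕ) = 0 ∧ a = (e i).1) ∨ ((k : ℕ) = m - 2 ∧ a = (e i).2))
    (hGinr : ∀ (i j : ι) (k l : Fin (m - 1)),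
      G'.Adj (Sum.inr (i, k)) (Sum.inr (j, l)) ↔
        (i = j ∧ ((k : ℕ) + 1 = l ∨ (l : ℕ) + 1 = k)))
    {v : V ⊕ ι × Fin (m-1)} (c : G'.Walk v v) (hc : c.IsCycle)
    (a : V) (i : ι) (k : Fin (m-1)) (had : G'.Adj (inl a) (inr (i,k)))
    (hd : (⟨(inl a, inr (i,k)), had⟩ : G'.Dart) ∈ c.darts) :
    2 * m < c.length := by
  classical
  have ha' : (inl a : V ⊕ ι × Fin (m-1)) ∈ c.support := by
    have := c.dart_fst_mem_support_of_mem_darts hd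
    simpa using this
  have hlenrot : (c.rotate _ ha').length = c.length := length_rotate' c ha'
  have hc2 : (c.rotate _ ha').IsCycle := hc.rotate ha'
  have hd2 : (⟨(inl a, inr (i,k)), had⟩ : G'.Dart) ∈ (c.rotate _ ha').darts :=
    (c.rotate_darts _ ha').mem_iff.mpr hd
  rw [← hlenrot]
  set c2 := c.rotate _ ha' with hc2def
  clear_value c2
  clear hlenrot hd hc2def ha' hc
  cases c2 with
  | nil => exact absurd rfl hc2.ne_nil
  | cons h2 p =>
    rename_i w
    obtain ⟨hp, hedge⟩ := (Walk.cons_isCycle_iff p h2).mp hc2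
    -- the first dart of the rotated cycle is our dart
    have hw : w = inr (i,k) := by
      rw [Walk.darts_cons, List.mem_cons] at hd2
      rcases hd2 with hd2 | hd2
      · have := congrArg SimpleGraph.Dart.toProd hd2
        simp only [] at this
        exact (Prod.ext_iff.mp this).2.symm
      · exfalso
        have hmem : (inl a : V ⊕ ι × Fin (m-1)) ∈ p.support.dropLast := by
          rw [← Walk.map_fst_darts]
          exact List.mem_map.mpr ⟨_, hd2, rfl⟩
        have hnd : p.support.Nodup := hp.support_nodup
        have hlast : p.support.getLast (Walk.support_ne_nil p) = inl a := Walk.getLast_support p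
        have hsplit : p.support.dropLast ++ [inl a] = p.support := by
          conv_rhs => rw [← List.dropLast_append_getLast (Walk.support_ne_nil p)]
          rw [hlast]
        rw [← hsplit] at hnd
        rcases List.nodup_append.mp hnd with ⟨-, -, hdisj⟩
        exact hdisj _ hmem _ (by simp) rfl
    subst hw
    rw [Walk.length_cons]
    rcases (hGcross a i k).mp h2 with ⟨hk0, ha⟩ | ⟨hk2, ha⟩
    · -- march up
      subst ha
      obtain ⟨p', hp', hplen, havoid, hsub⟩ := march_up hGcross hGinr i (m-2) k (e i).1 p
        (by omega) hp (fun _ => hedge) (by intro l hl; omega)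
      obtain ⟨q, hwt, hnew⟩ := projW hm hne hGinl hGcross hGinr p'.length (e i).2 (e i).1 p' le_rfl hp'
      have hq0 : q.length ≠ 0 := by
        intro h0
        exact hne i (Walk.eq_of_length_eq_zero h0).symm
      have hkey : m + 1 ≤ p'.length := by
        by_cases hallG : ∀ x y, s(x,y) ∈ q.edges → G.Adj x y
        · obtain ⟨W, hW⟩ := wtW_allG G (HGr G e) m q hallG
          by_contra hcon
          refine hfar i ⟨W.reverse.bypass, W.reverse.bypass_isPath, ?_⟩
          have h1 := W.reverse.length_bypass_le
          have h2 := length_le_wtW G (HGr G e) m (by omega) q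
          rw [Walk.length_reverse] at h1
          omega
        · push_neg at hallG
          obtain ⟨x, y, hmem, hnG⟩ := hallG
          have h2 : 2 ≤ q.length := by
            by_contra hq1
            have hq1 : q.length = 1 := by omega
            obtain ⟨w', hq, qtail, rfl⟩ := Walk.exists_eq_cons_of_ne (hne i).symm q
            have hq0' : qtail.length = 0 := by
              rw [Walk.length_cons] at hq1; omega
            have hw' : w' = (e i).1 := Walk.eq_of_length_eq_zero hq0'
            subst hw'
            have hqe : qtail.edges = [] := by
              have := qtail.length_edges
              rw [hq0'] at this
              exact List.length_eq_zero_iff.mp this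
            rw [Walk.edges_cons, hqe, List.mem_cons] at hmem
            rcases hmem with hmem | hmem
            · obtain ⟨j, hj, l, hl⟩ := hnew x y (by rw [Walk.edges_cons, hqe, hmem]; exact List.mem_cons_self) hnG
              have hij : j = i := by
                apply hinj
                rcases Sym2.eq_iff.mp hmem with ⟨rfl, rfl⟩ | ⟨rfl, rfl⟩
                · rcases hj with hj | hj
                  · right; rw [hj]
                  · left; rw [hj]
                · rcases hj with hj | hj
                  · left; rw [hj]
                  · right; rw [hj]
              subst hij
              exact havoid l hl
            · simp at hmem
          have h3 := wtW_new G (HGr G e) m (by omega) q x y hmem hnG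
          omega
      omega
    · -- march down
      subst ha
      obtain ⟨p', hp', hplen, havoid, hsub⟩ := march_down hGcross hGinr i (m-2) k (e i).2 p
        (by omega) hp (fun _ => hedge) (by intro l hl; have := l.isLt; omega)
      obtain ⟨q, hwt, hnew⟩ := projW hm hne hGinl hGcross hGinr p'.length (e i).1 (e i).2 p' le_rfl hp'
      have hq0 : q.length ≠ 0 := by
        intro h0
        exact hne i (Walk.eq_of_length_eq_zero h0)
      have hkey : m + 1 ≤ p'.length := by
        by_cases hallG : ∀ x y, s(x,y) ∈ q.edges → G.Adj x y
        · obtain ⟨W, hW⟩ := wtW_allG G (HGr G e) m q hallG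
          by_contra hcon
          refine hfar i ⟨W.bypass, W.bypass_isPath, ?_⟩
          have h1 := W.length_bypass_le
          have h2 := length_le_wtW G (HGr G e) m (by omega) q
          omega
        · push_neg at hallG
          obtain ⟨x, y, hmem, hnG⟩ := hallG
          have h2 : 2 ≤ q.length := by
            by_contra hq1
            have hq1 : q.length = 1 := by omega
            obtain ⟨w', hq, qtail, rfl⟩ := Walk.exists_eq_cons_of_ne (hne i) q
            have hq0' : qtail.length = 0 := by
              rw [Walk.length_cons] at hq1; omega
            have hw' : w' = (e i).2 := Walk.eq_of_length_eq_zero hq0'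
            subst hw'
            have hqe : qtail.edges = [] := by
              have := qtail.length_edges
              rw [hq0'] at this
              exact List.length_eq_zero_iff.mp this
            rw [Walk.edges_cons, hqe, List.mem_cons] at hmem
            rcases hmem with hmem | hmem
            · obtain ⟨j, hj, l, hl⟩ := hnew x y (by rw [Walk.edges_cons, hqe, hmem]; exact List.mem_cons_self) hnG
              have hij : j = i := by
                apply hinj
                rcases Sym2.eq_iff.mp hmem with ⟨rfl, rfl⟩ | ⟨rfl, rfl⟩
                · rcases hj with hj | hj
                  · left; rw [hj]
                  · right; rw [hj]
                · rcases hj with hj | hj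
                  · right; rw [hj]
                  · left; rw [hj]
              subst hij
              exact havoid l hl
            · simp at hmem
          have h3 := wtW_new G (HGr G e) m (by omega) q x y hmem hnG
          omega
      omega

lemma toG (hGinl : ∀ a b : V, G'.Adj (Sum.inl a) (Sum.inl b) ↔ G.Adj a b) :
    ∀ (N : ℕ) (x y : V) (p : G'.Walk (inl x) (inl y)), p.length ≤ N →
    (∀ z ∈ p.support, ∃ t, z = inl t) →
    ∃ W : G.Walk x y, W.length = p.length ∧ p.support = W.support.map inl ∧
      p.edges = W.edges.map (Sym2.map inl) := by
  intro N
  induction N with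
  | zero =>
    intro x y p hlen hall
    have h0 : p.length = 0 := by omega
    have hxy : x = y := Sum.inl_injective (Walk.eq_of_length_eq_zero h0)
    subst hxy
    have hnil : p = Walk.nil := Walk.nil_iff_eq_nil.mp (Walk.length_eq_zero_iff.mp h0)
    subst hnil
    exact ⟨Walk.nil, by simp⟩
  | succ N ih =>
    intro x y p hlen hall
    cases p with
    | nil => exact ⟨Walk.nil, by simp⟩
    | cons h tail =>
      rename_i w
      obtain ⟨x', rfl⟩ := hall w (by rw [Walk.support_cons]; exact List.mem_cons_of_mem _ tail.start_mem_support)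
      have hG : G.Adj x x' := (hGinl x x').mp h
      rw [Walk.length_cons] at hlen
      obtain ⟨W, hWl, hWs, hWe⟩ := ih x' y tail (by omega)
        (fun z hz => hall z (by rw [Walk.support_cons]; exact List.mem_cons_of_mem _ hz))
      refine ⟨Walk.cons hG W, ?_, ?_, ?_⟩
      · simp [hWl]
      · rw [Walk.support_cons, Walk.support_cons, List.map_cons, hWs]
      · rw [Walk.edges_cons, Walk.edges_cons, List.map_cons, hWe]
        rfl

lemma same_i
    (hGinr : ∀ (i j : ι) (k l : Fin (m - 1)),
      G'.Adj (Sum.inr (i, k)) (Sum.inr (j, l)) ↔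
        (i = j ∧ ((k : ℕ) + 1 = l ∨ (l : ℕ) + 1 = k))) :
    ∀ {z y : V ⊕ ι × Fin (m-1)} (p : G'.Walk z y) (i : ι) (k : Fin (m-1)),
    z = inr (i, k) → (∀ w ∈ p.support, ∃ jl : ι × Fin (m-1), w = inr jl) →
    ∀ w ∈ p.support, ∃ l : Fin (m-1), w = inr (i, l) := by
  intro z y p
  induction p with
  | nil =>
    intro i k hz hall w hw
    simp only [Walk.support_nil, List.mem_cons] at hw
    rcases hw with rfl | hw
    · exact ⟨k, hz⟩
    · simp at hw
  | @cons z v y h q ih =>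
    intro i k hz hall w hw
    subst hz
    obtain ⟨⟨j, l⟩, rfl⟩ := hall v (by rw [Walk.support_cons]; exact List.mem_cons_of_mem _ q.start_mem_support)
    obtain ⟨rfl, -⟩ := (hGinr i j k l).mp h
    rw [Walk.support_cons, List.mem_cons] at hw
    rcases hw with rfl | hw
    · exact ⟨k, rfl⟩
    · exact ih i l rfl (fun w' hw' => hall w' (by rw [Walk.support_cons]; exact List.mem_cons_of_mem _ hw')) w hw

lemma no_all_inr
    (hGinr : ∀ (i j : ι) (k l : Fin (m - 1)),
      G'.Adj (Sum.inr (i, k)) (Sum.inr (j, l)) ↔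
        (i = j ∧ ((k : ℕ) + 1 = l ∨ (l : ℕ) + 1 = k)))
    {v : V ⊕ ι × Fin (m-1)} (c : G'.Walk v v) (hc : c.IsCycle)
    (hall : ∀ z ∈ c.support, ∃ jl : ι × Fin (m-1), z = inr jl) : False := by
  classical
  obtain ⟨⟨i0, k0⟩, hv⟩ := hall v c.start_mem_support
  have hsame : ∀ w ∈ c.support, ∃ l : Fin (m-1), w = inr (i0, l) :=
    same_i hGinr c i0 k0 hv hall
  -- pick a vertex of maximal second coordinate
  obtain ⟨u, hus, hmax⟩ := Finset.exists_max_image c.support.toFinset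
    (fun z => Sum.elim (fun _ => (0:ℕ)) (fun jl => (jl.2 : ℕ)) z)
    ⟨v, List.mem_toFinset.mpr c.start_mem_support⟩
  rw [List.mem_toFinset] at hus
  obtain ⟨K, hK⟩ := hsame u hus
  subst hK
  have hmax' : ∀ w ∈ c.support, Sum.elim (fun _ => (0:ℕ)) (fun jl => (jl.2 : ℕ)) w ≤ (K : ℕ) := by
    intro w hw
    simpa using hmax w (List.mem_toFinset.mpr hw)
  have hc2 : (c.rotate _ hus).IsCycle := hc.rotate hus
  have hsub2 : ∀ z ∈ (c.rotate _ hus).support, z ∈ c.support := by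
    intro z hz
    rw [Walk.support_eq_cons, List.mem_cons] at hz
    rcases hz with rfl | hz
    · exact hus
    · have := (c.support_rotate _ hus).mem_iff.mp hz
      rw [Walk.support_eq_cons c, List.mem_cons]
      exact Or.inr this
  set c2 := c.rotate _ hus with hc2def
  clear_value c2
  clear hc2def hc hmax
  cases c2 with
  | nil => exact absurd rfl hc2.ne_nil
  | cons h2 p =>
    rename_i w2
    obtain ⟨hp, hedge⟩ := (Walk.cons_isCycle_iff p h2).mp hc2
    have hw2mem : w2 ∈ c.support := hsub2 w2
      (by rw [Walk.support_cons]; exact List.mem_cons_of_mem _ p.start_mem_support)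
    obtain ⟨k1, rfl⟩ := hsame w2 hw2mem
    have hk1 : (k1 : ℕ) + 1 = (K : ℕ) := by
      rcases ((hGinr i0 i0 K k1).mp h2).2 with hh | hh
      · exfalso
        have := hmax' (inr (i0, k1)) hw2mem
        simp at this
        omega
      · exact hh
    -- p is nonnil
    have hplen : 2 ≤ p.length := by
      have := hc2.three_le_length
      rw [Walk.length_cons] at this
      omega
    have hne13 : (inr (i0,K) : V ⊕ ι × Fin (m-1)) ≠ inr (i0,k1) := by
      intro hEq
      have : K = k1 := by simpa using hEq
      subst this
      omega
    obtain ⟨w3, h3, p3, hdecomp⟩ := Walk.exists_eq_cons_of_ne hne13 p.reverse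
    have hw3mem : w3 ∈ c.support := by
      apply hsub2
      rw [Walk.support_cons]
      apply List.mem_cons_of_mem
      have : w3 ∈ p.reverse.support := by
        rw [hdecomp, Walk.support_cons]
        exact List.mem_cons_of_mem _ p3.start_mem_support
      rw [Walk.support_reverse, List.mem_reverse] at this
      exact this
    obtain ⟨k2, rfl⟩ := hsame w3 hw3mem
    have hk2 : (k2 : ℕ) + 1 = (K : ℕ) := by
      rcases ((hGinr i0 i0 K k2).mp h3).2 with hh | hh
      · exfalso
        have := hmax' (inr (i0, k2)) hw3mem
        simp at this
        omega
      · exact hh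
    have hkk : k2 = k1 := Fin.ext (by omega)
    subst hkk
    apply hedge
    have : s(inr (i0,K), inr (i0,k2)) ∈ p.reverse.edges := by
      rw [hdecomp, Walk.edges_cons]
      exact List.mem_cons_self
    rw [Walk.edges_reverse, List.mem_reverse] at this
    rw [Sym2.eq_swap] at this
    rw [Sym2.eq_swap]
    exact this

end PMain


/-- The construction `P(G)`, adding a new formal path of length `n/2` between each
pair of vertices admitting no path of length at most `n/2`, creates no cycle of
length at most `n`. -/
theorem P_no_short_cycles {V ι : Type*} (G : SimpleGraph V) (n m : ℕ)
    (hn : 4 ≤ n) (hnm : n = 2 * m)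
    (hcyc : ∀ (v : V) (c : G.Walk v v), c.IsCycle → n < c.length)
    (e : ι → V × V)
    (hne : ∀ i, (e i).1 ≠ (e i).2)
    (hfar : ∀ i, ¬ ∃ p : G.Walk (e i).1 (e i).2, p.IsPath ∧ p.length ≤ m)
    (hinj : ∀ i j, (e i = e j ∨ e i = ((e j).2, (e j).1)) → i = j)
    (hsurj : ∀ a b : V, a ≠ b →
      (¬ ∃ p : G.Walk a b, p.IsPath ∧ p.length ≤ m) →
      ∃ i, e i = (a, b) ∨ e i = (b, a))
    (G' : SimpleGraph (V ⊕ ι × Fin (m - 1)))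
    (hGinl : ∀ a b : V, G'.Adj (Sum.inl a) (Sum.inl b) ↔ G.Adj a b)
    (hGcross : ∀ (a : V) (i : ι) (k : Fin (m - 1)),
      G'.Adj (Sum.inl a) (Sum.inr (i, k)) ↔
        ((k : ℕ) = 0 ∧ a = (e i).1) ∨ ((k : ℕ) = m - 2 ∧ a = (e i).2))
    (hGinr : ∀ (i j : ι) (k l : Fin (m - 1)),
      G'.Adj (Sum.inr (i, k)) (Sum.inr (j, l)) ↔
        (i = j ∧ ((k : ℕ) + 1 = l ∨ (l : ℕ) + 1 = k))) :
    ∀ (v : V ⊕ ι × Fin (m - 1)) (c : G'.Walk v v), c.IsCycle → n < c.length := by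
  intro v c hc
  classical
  have hm : 2 ≤ m := by omega
  rcases Classical.em (∃ jl : ι × Fin (m-1), (Sum.inr jl : V ⊕ ι × Fin (m-1)) ∈ c.support) with hR | hR
  · rcases Classical.em (∃ a : V, (Sum.inl a : V ⊕ ι × Fin (m-1)) ∈ c.support) with hL | hL
    · have hdart : ∃ (a : V) (ik : ι × Fin (m-1)) (h : G'.Adj (Sum.inl a) (Sum.inr ik)),
          (⟨(Sum.inl a, Sum.inr ik), h⟩ : G'.Dart) ∈ c.darts := by
        cases v with
        | inl a0 => exact LR1 c ⟨a0, rfl⟩ hR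
        | inr jl0 => exact LR2 c ⟨jl0, rfl⟩ hL
      obtain ⟨a, ⟨i, k⟩, had, hd⟩ := hdart
      have := main_cross hm hne hfar hinj hGinl hGcross hGinr c hc a i k had hd
      omega
    · push_neg at hL
      exact (no_all_inr hGinr c hc (fun z hz => by
        cases z with
        | inl a => exact absurd hz (hL a)
        | inr jl => exact ⟨jl, rfl⟩)).elim
  · push_neg at hR
    have hall : ∀ z ∈ c.support, ∃ t, z = Sum.inl t := by
      intro z hz
      cases z with
      | inl t => exact ⟨t, rfl⟩
      | inr jl => exact absurd hz (hR jl)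
    obtain ⟨x, hx⟩ := hall v c.start_mem_support
    subst hx
    obtain ⟨W, hWl, hWs, hWe⟩ := toG hGinl c.length x x c le_rfl hall
    have hWc : W.IsCycle := by
      rw [SimpleGraph.Walk.isCycle_def]
      rw [SimpleGraph.Walk.isCycle_def] at hc
      obtain ⟨ht, hnil, hnd⟩ := hc
      refine ⟨⟨?_⟩, ?_, ?_⟩
      · have := ht.edges_nodup
        rw [hWe] at this
        exact this.of_map _
      · intro hWn
        apply hnil
        rw [← SimpleGraph.Walk.nil_iff_eq_nil, ← SimpleGraph.Walk.length_eq_zero_iff]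
        rw [← hWl, hWn]
        simp
      · rw [SimpleGraph.Walk.support_eq_cons W, List.map_cons] at hWs
        have h2 : c.support.tail = W.support.tail.map Sum.inl := by
          rw [hWs, List.tail_cons]
        rw [h2] at hnd
        exact hnd.of_map _
    have := hcyc x W hWc
    omega
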